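/- A tower contains no perfect subset: if X ⊆ [ω]^ω is well-ordered by the relation x ≤ y iff y ⊆* x (reverse almost inclusion), then X contains no nonempty perfect set. -/

import Mathlib

/-- Cantor space, whose points code subsets of ω. -/
abbrev Cantor : Type := ℕ → Bool

/-- The subset of ω coded by a point of Cantor space. -/
def cset (x : Cantor) : Set ℕ := {n | x n = true}

/-- `a ⊆* b` : almost inclusion. -/
def AlmostSub (a b : Set ℕ) : Prop := (a \ b).Finite

namespace TowerNoPerfectAux

/-- The strict order relation of the tower, on points of Cantor space. -/
def Rel (x y : Cantor) : Prop :=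
  AlmostSub (cset y) (cset x) ∧ ¬ AlmostSub (cset x) (cset y)

/-- Closed approximations to the almost-inclusion relation. -/
def K (n : ℕ) : Set (Cantor × Cantor) :=
  {p | ∀ m, n ≤ m → p.1 m = true → p.2 m = true}

lemma isClosed_K (n : ℕ) : IsClosed (K n) := by
  have h : K n = ⋂ m, ⋂ (_ : n ≤ m),
      ({p : Cantor × Cantor | p.1 m = false} ∪ {p : Cantor × Cantor | p.2 m = true}) := by
    ext p
    simp only [K, Set.mem_setOf_eq, Set.mem_iInter, Set.mem_union]
    constructor
    · intro hp m hm
      rcases Bool.eq_false_or_eq_true (p.1 m) with h1 | h1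
      · exact Or.inr (hp m hm h1)
      · exact Or.inl h1
    · intro hp m hm h1
      rcases hp m hm with h2 | h2
      · rw [h1] at h2; exact absurd h2 (by simp)
      · exact h2
  rw [h]
  refine isClosed_iInter fun m => isClosed_iInter fun _ => IsClosed.union ?_ ?_
  · exact isClosed_eq ((continuous_apply m).comp continuous_fst) continuous_const
  · exact isClosed_eq ((continuous_apply m).comp continuous_snd) continuous_const

lemma almostSub_iff_mem_K (a b : Cantor) :
    AlmostSub (cset a) (cset b) ↔ ∃ n, (a, b) ∈ K n := by
  constructor
  · intro h
    rcases Set.Finite.bddAbove h with ⟨N, hN⟩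
    refine ⟨N + 1, fun m hm h1 => ?_⟩
    by_contra h2
    have hmem : m ∈ cset a \ cset b := ⟨h1, fun hb => h2 hb⟩
    have := hN hmem
    omega
  · rintro ⟨n, hn⟩
    apply (Set.finite_Iio n).subset
    rintro m ⟨h1, h2⟩
    by_contra hm
    exact h2 (hn m (by simpa using hm) h1)

/-- Basic clopen cylinders. -/
def cyl (x : Cantor) (N : ℕ) : Set Cantor := {y | ∀ i < N, y i = x i}

lemma cyl_eq_pi (x : Cantor) (N : ℕ) :
    cyl x N = Set.pi ↑(Finset.range N) (fun i => {x i}) := by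
  ext y
  simp [cyl, Set.mem_pi]

lemma isOpen_cyl (x : Cantor) (N : ℕ) : IsOpen (cyl x N) := by
  rw [cyl_eq_pi]
  exact isOpen_set_pi (Finset.range N).finite_toSet (fun a _ => isOpen_discrete _)

lemma isClosed_cyl (x : Cantor) (N : ℕ) : IsClosed (cyl x N) := by
  rw [cyl_eq_pi]
  exact isClosed_set_pi (fun a _ => isClosed_discrete _)

lemma self_mem_cyl (x : Cantor) (N : ℕ) : x ∈ cyl x N := fun _ _ => rfl

lemma cyl_mono (x : Cantor) {N M : ℕ} (h : N ≤ M) : cyl x M ⊆ cyl x N :=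
  fun y hy i hi => hy i (lt_of_lt_of_le hi h)

lemma exists_cyl_subset {U : Set Cantor} (hU : IsOpen U) {x : Cantor} (hx : x ∈ U) :
    ∃ N, cyl x N ⊆ U := by
  rcases isOpen_pi_iff.mp hU x hx with ⟨I, u, hu, hsub⟩
  refine ⟨(I.sup id) + 1, fun y hy => hsub ?_⟩
  intro a ha
  have h1 : a ≤ I.sup id := Finset.le_sup (f := id) ha
  have h2 : y a = x a := hy a (by omega)
  rw [h2]
  exact (hu a ha).2

/-- Key step: inside any nonempty perfect subset of the tower, there is a point `a`
    and a nonempty perfect subset all of whose elements are strictly below `a`. -/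
lemma step (X Q : Set Cantor)
    (tri : ∀ a ∈ X, ∀ b ∈ X, a ≠ b → Rel a b ∨ Rel b a)
    (hQ : Perfect Q) (hne : Q.Nonempty) (hQX : Q ⊆ X) :
    ∃ a ∈ Q, ∃ B, B ⊆ Q ∧ Perfect B ∧ B.Nonempty ∧ ∀ b ∈ B, Rel b a := by
  classical
  set S : Set (Cantor × Cantor) := Q ×ˢ Q with hSdef
  have hScl : IsClosed S := hQ.closed.prod hQ.closed
  haveI : CompactSpace ↥S := isCompact_iff_compactSpace.mp hScl.isCompact
  haveI : LocallyCompactSpace ↥S := inferInstance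
  haveI : BaireSpace ↥S := inferInstance
  obtain ⟨q0, hq0⟩ := hne
  haveI : Nonempty ↥S := ⟨⟨(q0, q0), ⟨hq0, hq0⟩⟩⟩
  -- ambient closed family
  let T : Option (ℕ × Bool) → Set (Cantor × Cantor) := fun i =>
    match i with
    | none => {p | p.1 = p.2}
    | some (n, false) => K n
    | some (n, true) => Prod.swap ⁻¹' K n
  have hTcl : ∀ i, IsClosed (T i) := by
    rintro (_ | ⟨n, (_ | _)⟩)
    · exact isClosed_eq continuous_fst continuous_snd
    · exact isClosed_K n
    · exact (isClosed_K n).preimage continuous_swap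
  have hTcov : ∀ p ∈ S, ∃ i, p ∈ T i := by
    rintro ⟨a, b⟩ hab
    have ha : a ∈ Q := hab.1
    have hb : b ∈ Q := hab.2
    by_cases hEq : a = b
    · exact ⟨none, hEq⟩
    · rcases tri a (hQX ha) b (hQX hb) hEq with h | h
      · rcases (almostSub_iff_mem_K b a).mp h.1 with ⟨n, hn⟩
        exact ⟨some (n, true), hn⟩
      · rcases (almostSub_iff_mem_K a b).mp h.1 with ⟨n, hn⟩
        exact ⟨some (n, false), hn⟩
  -- Baire category in the compact space S
  have hcov : (⋃ i, (Subtype.val ⁻¹' T i : Set ↥S)) = Set.univ := by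
    ext ⟨p, hp⟩
    simp only [Set.mem_iUnion, Set.mem_preimage, Set.mem_univ, iff_true]
    exact hTcov p hp
  obtain ⟨i, x, hx⟩ := nonempty_interior_of_iUnion_of_closed
    (f := fun i => (Subtype.val ⁻¹' T i : Set ↥S))
    (fun i => (hTcl i).preimage continuous_subtype_val) hcov
  -- extract an ambient open set
  rcases mem_interior.mp hx with ⟨U, hUsub, hUopen, hxU⟩
  rcases isOpen_induced_iff.mp hUopen with ⟨W, hWopen, hWeq⟩
  have hxW : (x : Cantor × Cantor) ∈ W := by rw [← hWeq] at hxU; exact hxU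
  have hWS : ∀ p ∈ S, p ∈ W → p ∈ T i := by
    intro p hp hpW
    have : (⟨p, hp⟩ : ↥S) ∈ U := by rw [← hWeq]; exact hpW
    exact hUsub this
  obtain ⟨⟨a₀, b₀⟩, hxS⟩ := x
  have ha₀Q : a₀ ∈ Q := hxS.1
  have hb₀Q : b₀ ∈ Q := hxS.2
  rcases isOpen_prod_iff.mp hWopen a₀ b₀ hxW with ⟨U1, V1, hU1, hV1, ha₀U, hb₀V, hUV⟩
  -- find a pair of *distinct* points of Q in U1 × V1
  obtain ⟨p, q, hpQ, hqQ, hpU, hqV, hpq⟩ :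
      ∃ p q, p ∈ Q ∧ q ∈ Q ∧ p ∈ U1 ∧ q ∈ V1 ∧ p ≠ q := by
    by_cases hEq : a₀ = b₀
    · subst hEq
      have hnb : U1 ∩ V1 ∈ nhds a₀ :=
        Filter.inter_mem (hU1.mem_nhds ha₀U) (hV1.mem_nhds hb₀V)
      obtain ⟨y, ⟨hyUV, hyQ⟩, hyne⟩ := accPt_iff_nhds.mp (hQ.acc a₀ ha₀Q) _ hnb
      exact ⟨a₀, y, ha₀Q, hyQ, ha₀U, hyUV.2, fun h => hyne h.symm⟩
    · exact ⟨a₀, b₀, ha₀Q, hb₀Q, ha₀U, hb₀V, hEq⟩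
  have hWT : ∀ x' ∈ U1, ∀ y' ∈ V1, (x', y') ∈ S → (x', y') ∈ T i := by
    intro x' hx' y' hy' hS'
    exact hWS (x', y') hS' (hUV ⟨hx', hy'⟩)
  -- the diagonal case is impossible
  rcases i with (_ | ⟨n, bb⟩)
  · exact absurd (hWT p hpU q hqV ⟨hpQ, hqQ⟩) hpq
  -- find disjoint clopen cylinders
  obtain ⟨m, hm⟩ := Function.ne_iff.mp hpq
  obtain ⟨N₁, hN₁⟩ := exists_cyl_subset hU1 hpU
  obtain ⟨N₂, hN₂⟩ := exists_cyl_subset hV1 hqV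
  set N : ℕ := max (max N₁ N₂) (m + 1) with hNdef
  set A : Set Cantor := Q ∩ cyl p N with hAdef
  set B : Set Cantor := Q ∩ cyl q N with hBdef
  have hAsubU : ∀ x' ∈ A, x' ∈ U1 := fun x' hx' =>
    hN₁ (cyl_mono p (le_trans (le_max_left _ _) (le_max_left _ _)) hx'.2)
  have hBsubV : ∀ y' ∈ B, y' ∈ V1 := fun y' hy' =>
    hN₂ (cyl_mono q (le_trans (le_max_right _ _) (le_max_left _ _)) hy'.2)
  have hABne : ∀ x' ∈ A, ∀ y' ∈ B, x' ≠ y' := by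
    intro x' hx' y' hy' hEq
    have h1 : x' m = p m := hx'.2 m (lt_of_lt_of_le (Nat.lt_succ_self m) (le_max_right _ _))
    have h2 : y' m = q m := hy'.2 m (lt_of_lt_of_le (Nat.lt_succ_self m) (le_max_right _ _))
    rw [hEq, h2] at h1
    exact hm h1.symm
  have hABT : ∀ x' ∈ A, ∀ y' ∈ B, (x', y') ∈ T (some (n, bb)) := fun x' hx' y' hy' =>
    hWT x' (hAsubU x' hx') y' (hBsubV y' hy') ⟨hx'.1, hy'.1⟩
  have hpA : p ∈ A := ⟨hpQ, self_mem_cyl p N⟩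
  have hqB : q ∈ B := ⟨hqQ, self_mem_cyl q N⟩
  have hAperf : Perfect A := by
    refine ⟨hQ.closed.inter (isClosed_cyl p N), ?_⟩
    have := hQ.acc.open_inter (isOpen_cyl p N)
    rwa [Set.inter_comm] at this
  have hBperf : Perfect B := by
    refine ⟨hQ.closed.inter (isClosed_cyl q N), ?_⟩
    have := hQ.acc.open_inter (isOpen_cyl q N)
    rwa [Set.inter_comm] at this
  rcases bb with (_ | _)
  -- bb = false : every element of A is almost contained in every element of B,
  -- hence every element of B is strictly below every element of A.
  · refine ⟨p, hpA.1, B, fun y' hy' => hy'.1, hBperf, ⟨q, hqB⟩, ?_⟩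
    intro b hb
    have hsub : AlmostSub (cset p) (cset b) :=
      (almostSub_iff_mem_K p b).mpr ⟨n, hABT p hpA b hb⟩
    have hne' : p ≠ b := hABne p hpA b hb
    rcases tri p (hQX hpA.1) b (hQX hb.1) hne' with h | h
    · exact absurd hsub h.2
    · exact h
  -- bb = true : symmetric case.
  · refine ⟨q, hqB.1, A, fun x' hx' => hx'.1, hAperf, ⟨p, hpA⟩, ?_⟩
    intro b hb
    have hsub : AlmostSub (cset q) (cset b) :=
      (almostSub_iff_mem_K q b).mpr ⟨n, hABT b hb q hqB⟩
    have hne' : q ≠ b := fun h => hABne b hb q hqB h.symm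
    rcases tri q (hQX hqB.1) b (hQX hb.1) hne' with h | h
    · exact absurd hsub h.2
    · exact h

end TowerNoPerfectAux

theorem tower_no_perfect (X : Set Cantor)
    (hinf : ∀ x ∈ X, (cset x).Infinite)
    (hwo : IsWellOrder X (fun a b =>
      AlmostSub (cset b.1) (cset a.1) ∧ ¬ AlmostSub (cset a.1) (cset b.1)))
    (P : Set Cantor) (hPne : P.Nonempty) (hP : Perfect P) :
    ¬ P ⊆ X := by
  intro hPX
  classical
  -- trichotomy, transferred to points of Cantor space
  have tri : ∀ a ∈ X, ∀ b ∈ X, a ≠ b →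
      TowerNoPerfectAux.Rel a b ∨ TowerNoPerfectAux.Rel b a := by
    intro a ha b hb hne
    rcases @trichotomous _ _ hwo.toTrichotomous ⟨a, ha⟩ ⟨b, hb⟩ with h | h | h
    · exact Or.inl h
    · exact absurd (congrArg Subtype.val h) hne
    · exact Or.inr h
  -- iterate the key step
  let T := {Q : Set Cantor // Perfect Q ∧ Q.Nonempty ∧ Q ⊆ X}
  have hstep : ∀ t : T, ∃ a, ∃ B, a ∈ t.1 ∧ B ⊆ t.1 ∧ Perfect B ∧ B.Nonempty ∧
      ∀ b ∈ B, TowerNoPerfectAux.Rel b a := by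
    rintro ⟨Q, hQ, hne, hQX⟩
    obtain ⟨a, haQ, B, hBQ, hBp, hBne, hrel⟩ :=
      TowerNoPerfectAux.step X Q tri hQ hne hQX
    exact ⟨a, B, haQ, hBQ, hBp, hBne, hrel⟩
  choose av Bv hav hBsub hBperf hBne hrel using hstep
  let g : ℕ → T := fun n => Nat.rec
    (⟨P, hP, hPne, hPX⟩ : T)
    (fun _ t => (⟨Bv t, hBperf t, hBne t, (hBsub t).trans t.2.2.2⟩ : T)) n
  have hgsucc : ∀ n, (g (n + 1)).1 = Bv (g n) := fun n => rfl
  let a : ℕ → Cantor := fun n => av (g n)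
  have haX : ∀ n, a n ∈ X := fun n => (g n).2.2.2 (hav (g n))
  have hdesc : ∀ n, TowerNoPerfectAux.Rel (a (n + 1)) (a n) := by
    intro n
    have h1 : a (n + 1) ∈ Bv (g n) := by
      have := hav (g (n + 1))
      rwa [hgsucc n] at this
    exact hrel (g n) (a (n + 1)) h1
  -- contradiction with well-foundedness
  have hwf : WellFounded (fun a b : ↥X =>
      AlmostSub (cset b.1) (cset a.1) ∧ ¬ AlmostSub (cset a.1) (cset b.1)) :=
    hwo.toIsWellFounded.wf
  have hnoseq : ∀ x : ↥X, ∀ f : ℕ → ↥X, f 0 = x →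
      (∀ n, AlmostSub (cset (f n).1) (cset (f (n+1)).1) ∧
        ¬ AlmostSub (cset (f (n+1)).1) (cset (f n).1)) → False := by
    intro x
    induction x using WellFounded.induction hwf with
    | _ x ih =>
      intro f hf0 hf
      refine ih (f 1) ?_ (fun n => f (n + 1)) rfl (fun n => hf (n + 1))
      rw [← hf0]
      exact hf 0
  exact hnoseq ⟨a 0, haX 0⟩ (fun n => ⟨a n, haX n⟩) rfl (fun n => hdesc n)
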